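/- Assume ℕA is scored with respect to the finite family Φ. Then for every group homomorphism ψ : ℤ^d → ℤ with ψ(aᵢ) ≥ 0 for all i, the subgroup G_ψ of ℤ^d generated by {x ∈ ℕA : ψ(x) = 0} is saturated in ℤ^d: if x ∈ ℤ^d and k·x ∈ G_ψ for some integer k ≥ 1, then x ∈ G_ψ. (That is, for a scored semigroup, the group ℤ(A∩τ) generated by any face equals its own saturation.) -/

import Mathlib

/-!
Scored setting: `a₁,…,a_n ∈ ℤ^d` generate `ℤ^d` as a group, `ℕA` is the submonoid they
generate, and `Φ` is a finite set of surjective group homomorphisms `φ : ℤ^d → ℤ` with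
`φ(aᵢ) ≥ 0` (facet functionals). `ℕA` is scored w.r.t. `Φ` if
`ℕA = {x : φ(x) ∈ φ(ℕA) for all φ ∈ Φ}`.

Statement 12: for scored `ℕA`, the group `G_ψ = ℤ(A ∩ τ)` generated by any face
`{x ∈ ℕA : ψ x = 0}` is saturated in `ℤ^d`.
-/

/-- The submonoid `ℕA` of `ℤ^d` generated by `a₁,…,a_n`. -/
def NA {d n : ℕ} (a : Fin n → Fin d → ℤ) : AddSubmonoid (Fin d → ℤ) :=
  AddSubmonoid.closure (Set.range a)

/-- The subgroup `G_ψ = ℤ(A ∩ τ)` generated by the face `{x ∈ ℕA : ψ x = 0}`. -/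
def Gface {d n : ℕ} (a : Fin n → Fin d → ℤ) (ψ : (Fin d → ℤ) →+ ℤ) :
    AddSubgroup (Fin d → ℤ) :=
  AddSubgroup.closure {x | x ∈ NA a ∧ ψ x = 0}

/-- A functional which is nonnegative on the generators is nonnegative on `ℕA`. -/
lemma NA_nonneg {d n : ℕ} (a : Fin n → Fin d → ℤ) (φ : (Fin d → ℤ) →+ ℤ)
    (h : ∀ i, 0 ≤ φ (a i)) : ∀ x ∈ NA a, 0 ≤ φ x := by
  intro x hx
  induction hx using AddSubmonoid.closure_induction with
  | mem y hy => obtain ⟨i, rfl⟩ := hy; exact h i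
  | zero => simp
  | add y z _ _ hy hz => rw [map_add]; exact add_nonneg hy hz

/-- Numerical semigroup lemma: a submonoid of nonnegative integers containing `s, t`
with `s - t = 1` contains every integer `≥ t*t`. -/
lemma large_mem (S : AddSubmonoid ℤ) (hpos : ∀ u ∈ S, 0 ≤ u) {s t : ℤ}
    (hs : s ∈ S) (ht : t ∈ S) (hst : s - t = 1) :
    ∀ m : ℤ, t * t ≤ m → m ∈ S := by
  intro m hm
  have ht0 : 0 ≤ t := hpos t ht
  rcases ht0.eq_or_lt with h0 | h0
  · -- t = 0, so s = 1
    have hs1 : s = 1 := by omega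
    have hm0 : 0 ≤ m := by nlinarith
    have := S.nsmul_mem hs m.toNat
    rwa [nsmul_eq_mul, hs1, mul_one, Int.toNat_of_nonneg hm0] at this
  · set q := m / t with hq
    set r := m % t with hr
    have hr0 : 0 ≤ r := Int.emod_nonneg m (by omega)
    have hrt : r < t := Int.emod_lt_of_pos m h0
    have hqt : t ≤ q := (Int.le_ediv_iff_mul_le h0).2 hm
    have hqr : 0 ≤ q - r := by omega
    have hmem := S.add_mem (S.nsmul_mem hs r.toNat) (S.nsmul_mem ht (q - r).toNat)
    have heq : (r.toNat : ℤ) • s + ((q - r).toNat : ℤ) • t = m := by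
      rw [Int.toNat_of_nonneg hr0, Int.toNat_of_nonneg hqr]
      simp only [smul_eq_mul]
      linear_combination r * hst + Int.mul_ediv_add_emod m t + t * hq + hr
    rw [← heq]
    simpa using hmem


/-- If `ℕA` is scored w.r.t. `Φ`, then for every group homomorphism
`ψ : ℤ^d → ℤ` with `ψ(aᵢ) ≥ 0` for all `i`, the subgroup `G_ψ` is saturated in `ℤ^d`:
`k·x ∈ G_ψ` for some `k ≥ 1` implies `x ∈ G_ψ`. -/
theorem face_group_saturated_of_scored {d n : ℕ} (hd : 0 < d) (hn : 0 < n)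
    (a : Fin n → Fin d → ℤ) (hgen : AddSubgroup.closure (Set.range a) = ⊤)
    (Φ : Finset ((Fin d → ℤ) →+ ℤ))
    (hsurj : ∀ φ ∈ Φ, Function.Surjective φ)
    (hnonneg : ∀ φ ∈ Φ, ∀ i, 0 ≤ φ (a i))
    (hscored : (NA a : Set (Fin d → ℤ)) =
      {x | ∀ φ ∈ Φ, φ x ∈ φ '' (NA a : Set (Fin d → ℤ))})
    (ψ : (Fin d → ℤ) →+ ℤ) (hψ : ∀ i, 0 ≤ ψ (a i))
    (x : Fin d → ℤ) (hx : ∃ k : ℕ, 1 ≤ k ∧ (k : ℤ) • x ∈ Gface a ψ) :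
    x ∈ Gface a ψ := by
  classical
  obtain ⟨k, hk1, hkx⟩ := hx
  -- every element of ℤ^d is a difference of two elements of ℕA
  have hdiff : ∀ z : Fin d → ℤ, ∃ u ∈ NA a, ∃ v ∈ NA a, z = u - v := by
    intro z
    have hz : z ∈ AddSubgroup.closure (Set.range a) := by rw [hgen]; trivial
    induction hz using AddSubgroup.closure_induction with
    | mem y hy =>
      exact ⟨y, AddSubmonoid.subset_closure hy, 0, (NA a).zero_mem, by simp⟩
    | zero => exact ⟨0, (NA a).zero_mem, 0, (NA a).zero_mem, by simp⟩
    | add y z _ _ hy hz =>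
      obtain ⟨u, hu, v, hv, rfl⟩ := hy
      obtain ⟨u', hu', v', hv', rfl⟩ := hz
      exact ⟨u + u', (NA a).add_mem hu hu', v + v', (NA a).add_mem hv hv', by ring⟩
    | neg y _ hy =>
      obtain ⟨u, hu, v, hv, rfl⟩ := hy
      exact ⟨v, hv, u, hu, by ring⟩
  -- if φ ∈ Φ, all large enough integers lie in φ '' ℕA
  have hbig : ∀ φ, ∃ B : ℤ, φ ∈ Φ → ∀ m : ℤ, B ≤ m → m ∈ φ '' (NA a : Set (Fin d → ℤ)) := by
    intro φ
    by_cases hφ : φ ∈ Φ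
    · obtain ⟨z, hz⟩ := hsurj φ hφ 1
      obtain ⟨u, hu, v, hv, rfl⟩ := hdiff z
      set S : AddSubmonoid ℤ := AddSubmonoid.map φ (NA a)
      have hSpos : ∀ w ∈ S, 0 ≤ w := by
        rintro w ⟨y, hy, rfl⟩
        exact NA_nonneg a φ (hnonneg φ hφ) y hy
      have hsS : φ u ∈ S := ⟨u, hu, rfl⟩
      have htS : φ v ∈ S := ⟨v, hv, rfl⟩
      have h1 : φ u - φ v = 1 := by rw [← map_sub]; exact hz
      refine ⟨φ v * φ v, fun _ m hm => ?_⟩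
      have := large_mem S hSpos hsS htS h1 m hm
      rwa [← AddSubmonoid.coe_map φ (NA a)]
    · exact ⟨0, fun h => absurd h hφ⟩
  choose B hB using hbig
  -- ψ x = 0
  have hGker : Gface a ψ ≤ ψ.ker := by
    rw [Gface, AddSubgroup.closure_le]
    rintro y ⟨_, hy⟩
    exact hy
  have hψx : ψ x = 0 := by
    have := hGker hkx
    rw [AddMonoidHom.mem_ker, map_zsmul, smul_eq_mul] at this
    have hk0 : (k : ℤ) ≠ 0 := by exact_mod_cast Nat.one_le_iff_ne_zero.mp hk1
    exact (mul_eq_zero.mp this).resolve_left hk0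
  -- witness function for facets not vanishing on the face
  set F : Set (Fin d → ℤ) := {y | y ∈ NA a ∧ ψ y = 0} with hF
  have wfun : ∀ φ : (Fin d → ℤ) →+ ℤ, ∃ y, y ∈ NA a ∧ ψ y = 0 ∧
      ((∃ z ∈ F, φ z ≠ 0) → φ y ≠ 0) := by
    intro φ
    by_cases h : ∃ z ∈ F, φ z ≠ 0
    · obtain ⟨z, ⟨hz1, hz2⟩, hz3⟩ := h
      exact ⟨z, hz1, hz2, fun _ => hz3⟩
    · exact ⟨0, (NA a).zero_mem, by simp, fun h' => absurd h' h⟩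
  choose wf hwf1 hwf2 hwf3 using wfun
  set w : Fin d → ℤ := ∑ φ ∈ Φ, wf φ with hw
  have hwNA : w ∈ NA a := AddSubmonoid.sum_mem _ (fun φ _ => hwf1 φ)
  have hψw : ψ w = 0 := by
    rw [hw, map_sum]
    exact Finset.sum_eq_zero fun φ _ => hwf2 φ
  have hwF : w ∈ F := ⟨hwNA, hψw⟩
  -- each φ ∈ Φ is nonneg on each wf φ'
  have hφwf : ∀ φ ∈ Φ, ∀ φ', 0 ≤ φ (wf φ') := fun φ hφ φ' =>
    NA_nonneg a φ (hnonneg φ hφ) _ (hwf1 φ')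
  -- choose N
  set N : ℕ := (Φ.sum fun φ => (B φ - φ x).toNat) + 1 with hN
  -- key: x + N • w ∈ ℕA
  have hkey : x + (N : ℤ) • w ∈ NA a := by
    have : x + (N : ℤ) • w ∈ {y | ∀ φ ∈ Φ, φ y ∈ φ '' (NA a : Set (Fin d → ℤ))} := by
      intro φ hφ
      by_cases hvan : ∃ z ∈ F, φ z ≠ 0
      · -- φ w ≥ 1, so φ (x + N w) is large
        have hφw1 : 1 ≤ φ w := by
          rw [hw, map_sum]
          have hle : φ (wf φ) ≤ ∑ φ' ∈ Φ, φ (wf φ') :=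
            Finset.single_le_sum (fun φ' _ => hφwf φ hφ φ') hφ
          have := hwf3 φ hvan
          have h0 := hφwf φ hφ φ
          omega
        apply hB φ hφ
        have h1 : (B φ - φ x).toNat ≤ (Φ.sum fun φ' => (B φ' - φ' x).toNat) :=
          Finset.single_le_sum (f := fun φ' => (B φ' - φ' x).toNat) (fun φ' _ => Nat.zero_le _) hφ
        have h2 : B φ - φ x ≤ ((B φ - φ x).toNat : ℤ) := Int.self_le_toNat _
        have h3 : ((N : ℤ)) = ((Φ.sum fun φ' => (B φ' - φ' x).toNat : ℕ) : ℤ) + 1 := by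
          exact_mod_cast rfl
        have h4 : φ (x + (N : ℤ) • w) = φ x + (N : ℤ) * φ w := by
          rw [map_add, map_zsmul, smul_eq_mul]
        have h5 : ((Φ.sum fun φ' => (B φ' - φ' x).toNat : ℕ) : ℤ) ≥ ((B φ - φ x).toNat : ℤ) := by
          exact_mod_cast h1
        have hN0 : (0 : ℤ) ≤ (N : ℤ) := by positivity
        nlinarith [h4, h2, h5, hφw1, hN0]
      · -- φ vanishes on F, so φ (x + N w) = 0
        push_neg at hvan
        have hφx : φ x = 0 := by
          have hGφ : Gface a ψ ≤ φ.ker := by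
            rw [Gface, AddSubgroup.closure_le]
            intro y hy
            exact hvan y hy
          have := hGφ hkx
          rw [AddMonoidHom.mem_ker, map_zsmul, smul_eq_mul] at this
          rcases mul_eq_zero.mp this with h | h
          · exact absurd h (by exact_mod_cast Nat.one_le_iff_ne_zero.mp hk1)
          · exact h
        have hφw : φ w = 0 := hvan w hwF
        have : φ (x + (N : ℤ) • w) = 0 := by
          rw [map_add, map_zsmul, hφx, hφw, smul_zero, add_zero]
        rw [this]
        exact ⟨0, (NA a).zero_mem, map_zero φ⟩
    rw [← hscored] at this
    exact this
  -- finish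
  have hface : x + (N : ℤ) • w ∈ Gface a ψ := by
    apply AddSubgroup.subset_closure
    exact ⟨hkey, by rw [map_add, map_zsmul, hψx, hψw, smul_zero, add_zero]⟩
  have hwG : (N : ℤ) • w ∈ Gface a ψ :=
    AddSubgroup.zsmul_mem _ (AddSubgroup.subset_closure hwF) _
  have := (Gface a ψ).sub_mem hface hwG
  simpa using this
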